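/- Consider a k-channel linear system given by real matrices A ∈ ℝ^{n×n}, B_i ∈ ℝ^{n×m_i}, C_i ∈ ℝ^{l_i×n} for i ∈ {1, …, k}, and let λ ∈ ℂ. If there exists a subset S ⊆ {1, …, k} such that the block matrix [[λI_n − A, B_S],[C_{complement}, 0]] has rank < n over ℂ, then for every choice of real matrices F_i ∈ ℝ^{m_i×l_i}, rank(λI_n − A − ∑_{i=1}^k B_i F_i C_i) < n over ℂ; in particular λ is an eigenvalue of A + ∑_{i=1}^k B_i F_i C_i for every such choice, i.e., λ is in the fixed spectrum of the system. -/

import Mathlib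

/-- sufficiency: if some S ⊆ {1,…,k} gives
rank [[λI − A, B_S],[C_{Sᶜ}, 0]] < n, then for every choice of feedback
matrices Fᵢ, rank (λI − A − ∑ Bᵢ Fᵢ Cᵢ) < n; in particular λ is an eigenvalue
of A + ∑ Bᵢ Fᵢ Cᵢ for every such choice. -/
theorem fixed_spectrum_sufficiency (n k : ℕ) (m l : Fin k → ℕ)
    (A : Matrix (Fin n) (Fin n) ℝ)
    (B : ∀ i, Matrix (Fin n) (Fin (m i)) ℝ)
    (C : ∀ i, Matrix (Fin (l i)) (Fin n) ℝ)
    (lam : ℂ)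
    (h : ∃ S : Finset (Fin k),
        (Matrix.fromBlocks
          (lam • (1 : Matrix (Fin n) (Fin n) ℂ) - A.map (fun x => (x : ℂ)))
          (Matrix.of fun (a : Fin n) (c : (i : S) × Fin (m i.1)) =>
            ((B c.1 a c.2 : ℝ) : ℂ))
          (Matrix.of fun (c : (j : ↥(Sᶜ)) × Fin (l j.1)) (b : Fin n) =>
            ((C c.1 c.2 b : ℝ) : ℂ))
          0).rank < n) :
    ∀ F : ∀ i, Matrix (Fin (m i)) (Fin (l i)) ℝ,
      (lam • (1 : Matrix (Fin n) (Fin n) ℂ) -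
          (A + ∑ i, B i * F i * C i).map (fun x => (x : ℂ))).rank < n ∧
        (lam • (1 : Matrix (Fin n) (Fin n) ℂ) -
          (A + ∑ i, B i * F i * C i).map (fun x => (x : ℂ))).det = 0 := by
  obtain ⟨S, hS⟩ := h
  intro F
  set M11 : Matrix (Fin n) (Fin n) ℂ :=
    lam • (1 : Matrix (Fin n) (Fin n) ℂ) - A.map (fun x => (x : ℂ)) with hM11
  set M12 : Matrix (Fin n) ((i : S) × Fin (m i.1)) ℂ :=
    Matrix.of fun (a : Fin n) (c : (i : S) × Fin (m i.1)) => ((B c.1 a c.2 : ℝ) : ℂ) with hM12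
  set M21 : Matrix ((j : ↥(Sᶜ)) × Fin (l j.1)) (Fin n) ℂ :=
    Matrix.of fun (c : (j : ↥(Sᶜ)) × Fin (l j.1)) (b : Fin n) => ((C c.1 c.2 b : ℝ) : ℂ) with hM21
  set M := Matrix.fromBlocks M11 M12 M21 0 with hM
  set G : Matrix (Fin n) ((j : ↥(Sᶜ)) × Fin (l j.1)) ℂ :=
    Matrix.of fun i c => -(((B c.1.1 * F c.1.1) i c.2 : ℝ) : ℂ) with hG
  set H : Matrix ((i : S) × Fin (m i.1)) (Fin n) ℂ :=
    Matrix.of fun c b => -(((F c.1.1 * C c.1.1) c.2 b : ℝ) : ℂ) with hH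
  have hGM : (G * M21) = Matrix.of fun i b =>
      -((((∑ j ∈ Sᶜ, B j * F j * C j) i b : ℝ)) : ℂ) := by
    ext i b
    rw [Matrix.mul_apply, ← Finset.univ_sigma_univ, Finset.sum_sigma]
    have h1 : ∀ a : ↥(Sᶜ), (∑ s : Fin (l a.1), G i ⟨a, s⟩ * M21 ⟨a, s⟩ b)
        = -(((B a.1 * F a.1 * C a.1) i b : ℝ) : ℂ) := by
      intro a
      simp only [hG, hM21, Matrix.of_apply, Matrix.mul_apply]
      push_cast
      simp [Finset.sum_neg_distrib]
    simp only [h1]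
    rw [Finset.sum_coe_sort Sᶜ (fun j => -(((B j * F j * C j) i b : ℝ) : ℂ))]
    simp only [Matrix.of_apply, Matrix.sum_apply]
    push_cast
    simp [Finset.sum_neg_distrib]
  have hMH : (M12 * H) = Matrix.of fun i b =>
      -((((∑ j ∈ S, B j * F j * C j) i b : ℝ)) : ℂ) := by
    ext i b
    rw [Matrix.mul_apply, ← Finset.univ_sigma_univ, Finset.sum_sigma]
    have h1 : ∀ a : ↥S, (∑ s : Fin (m a.1), M12 i ⟨a, s⟩ * H ⟨a, s⟩ b)
        = -(((B a.1 * F a.1 * C a.1) i b : ℝ) : ℂ) := by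
      intro a
      simp only [hH, hM12, Matrix.of_apply]
      rw [show (B a.1 * F a.1 * C a.1) = B a.1 * (F a.1 * C a.1) from Matrix.mul_assoc _ _ _,
        Matrix.mul_apply]
      push_cast
      simp [Finset.sum_neg_distrib]
    simp only [h1]
    rw [Finset.sum_coe_sort S (fun j => -(((B j * F j * C j) i b : ℝ) : ℂ))]
    simp only [Matrix.of_apply, Matrix.sum_apply]
    push_cast
    simp [Finset.sum_neg_distrib]
  have key : (lam • (1 : Matrix (Fin n) (Fin n) ℂ) -
      (A + ∑ i, B i * F i * C i).map (fun x => (x : ℂ))) =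
      Matrix.fromCols (1 : Matrix (Fin n) (Fin n) ℂ) G * M * Matrix.fromRows (1 : Matrix (Fin n) (Fin n) ℂ) H := by
    rw [hM, Matrix.fromCols_mul_fromBlocks, Matrix.fromCols_mul_fromRows]
    simp only [Matrix.mul_zero, add_zero, Matrix.one_mul, Matrix.mul_one]
    rw [hGM, hMH]
    ext i b
    simp only [Matrix.sub_apply, Matrix.add_apply, Matrix.smul_apply, Matrix.map_apply,
      Matrix.of_apply, Matrix.sum_apply, hM11]
    rw [← Finset.sum_add_sum_compl S (fun j => ((B j * F j * C j : Matrix _ _ ℝ) i b))]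
    push_cast
    ring
  have hrank : (lam • (1 : Matrix (Fin n) (Fin n) ℂ) -
      (A + ∑ i, B i * F i * C i).map (fun x => (x : ℂ))).rank < n := by
    rw [key]
    calc (Matrix.fromCols (1 : Matrix (Fin n) (Fin n) ℂ) G * M * Matrix.fromRows (1 : Matrix (Fin n) (Fin n) ℂ) H).rank
        ≤ (Matrix.fromCols (1 : Matrix (Fin n) (Fin n) ℂ) G * M).rank := Matrix.rank_mul_le_left _ _
      _ ≤ M.rank := Matrix.rank_mul_le_right _ _
      _ < n := hS
  refine ⟨hrank, ?_⟩
  by_contra hdet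
  have hu : IsUnit (lam • (1 : Matrix (Fin n) (Fin n) ℂ) -
      (A + ∑ i, B i * F i * C i).map (fun x => (x : ℂ))) := by
    rw [Matrix.isUnit_iff_isUnit_det]
    exact isUnit_iff_ne_zero.mpr hdet
  have := Matrix.rank_of_isUnit _ hu
  simp [this] at hrank
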